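/- Let ι be an index set and (H_i)_{i ∈ ι} a family of real Hilbert spaces. Let L be a real topological vector space admitting a continuous linear map e : L → Π_{i ∈ ι} H_i that is a topological embedding (e is injective and induces the topology of L). Then for every real Banach space E and every continuous linear map f : L → E there exist a real Hilbert space H₀ and continuous linear maps g : L → H₀ and p : H₀ → E such that f = p ∘ g. -/

import Mathlib

open Filter Topology

/-- coordinate bound in `PiLp 2`. -/
lemma piLp_coord_norm_le {κ : Type*} [Fintype κ] (β : κ → Type*)
    [∀ k, SeminormedAddCommGroup (β k)] (x : PiLp 2 β) (k : κ) :
    ‖x k‖ ≤ ‖x‖ := by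
  have h1 : ‖x k‖ ^ 2 ≤ ‖x‖ ^ 2 := by
    rw [PiLp.norm_sq_eq_of_L2]
    exact Finset.single_le_sum (f := fun j => ‖x j‖ ^ 2)
      (fun j _ => sq_nonneg _) (Finset.mem_univ k)
  have := Real.sqrt_le_sqrt h1
  rwa [Real.sqrt_sq (norm_nonneg _), Real.sqrt_sq (norm_nonneg _)] at this

set_option synthInstance.maxHeartbeats 1000000 in
set_option maxHeartbeats 1000000 in
/-- Factorization lemma for multi-Hilbert spaces: if a real topological vector space `L`
embeds (as a topological vector space) into a product of real Hilbert spaces, then every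
continuous linear map from `L` to a real Banach space factors through a real Hilbert space. -/
theorem multiHilbert_factorization
    {ι : Type} (H : ι → Type)
    [∀ i, NormedAddCommGroup (H i)] [∀ i, InnerProductSpace ℝ (H i)]
    [∀ i, CompleteSpace (H i)]
    {L : Type} [AddCommGroup L] [Module ℝ L] [TopologicalSpace L]
    [IsTopologicalAddGroup L] [ContinuousSMul ℝ L]
    (e : L →L[ℝ] (∀ i, H i)) (he : Topology.IsEmbedding e)
    {E : Type} [NormedAddCommGroup E] [NormedSpace ℝ E] [CompleteSpace E]
    (f : L →L[ℝ] E) :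
    ∃ (H₀ : Type) (_ : NormedAddCommGroup H₀) (_ : InnerProductSpace ℝ H₀)
      (_ : CompleteSpace H₀) (g : L →L[ℝ] H₀) (p : H₀ →L[ℝ] E),
      f = p.comp g := by
  classical
  -- Step 1: a neighborhood of 0 in the product on which `f` is bounded by 1.
  have hU : f ⁻¹' Metric.closedBall 0 1 ∈ 𝓝 (0 : L) := by
    have : Metric.closedBall (0 : E) 1 ∈ 𝓝 (f 0) := by
      rw [map_zero]; exact Metric.closedBall_mem_nhds _ one_pos
    exact f.continuous.continuousAt.preimage_mem_nhds this
  rw [he.isInducing.nhds_eq_comap, map_zero] at hU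
  obtain ⟨V, hV, hVsub⟩ := Filter.mem_comap.1 hU
  rw [nhds_pi] at hV
  obtain ⟨I, t, ht, hIt⟩ := Filter.mem_pi'.1 hV
  -- Step 2: choose radii.
  choose ε hε hball using fun i => Metric.mem_nhds_iff.1 (ht i)
  -- Step 3: the finite-dimensional (in index) Hilbert space and the map `g`.
  set N := PiLp 2 (fun i : I => H i) with hN
  let g : L →L[ℝ] N :=
    ((PiLp.continuousLinearEquiv 2 ℝ (fun i : I => H i)).symm :
        (∀ i : I, H i) →L[ℝ] N).comp
      (ContinuousLinearMap.pi fun i : I =>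
        (ε (i : ι))⁻¹ • ((ContinuousLinearMap.proj (i : ι)).comp e))
  have hg_apply : ∀ (x : L) (i : I), g x i = (ε (i : ι))⁻¹ • e x (i : ι) := by
    intro x i; rfl
  -- Step 4: key bound `‖f x‖ ≤ ‖g x‖`.
  have claim1 : ∀ x : L, ‖g x‖ < 1 → ‖f x‖ ≤ 1 := by
    intro x hx
    have hmem : e x ∈ V := by
      apply hIt
      intro i hi
      have h1 : ‖g x ⟨i, hi⟩‖ < 1 := lt_of_le_of_lt (piLp_coord_norm_le _ (g x) ⟨i, hi⟩) hx
      rw [hg_apply, norm_smul, norm_inv, Real.norm_eq_abs, abs_of_pos (hε i)] at h1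
      have : ‖e x i‖ < ε i := by
        have := (inv_mul_lt_iff₀ (hε i)).1 h1
        simpa using this
      exact hball i (by simpa [Metric.mem_ball] using this)
    have := hVsub hmem
    simpa [Metric.mem_closedBall, dist_zero_right] using this
  have key : ∀ x : L, ‖f x‖ ≤ ‖g x‖ := by
    intro x
    have hr : ∀ r : ℝ, ‖g x‖ < r → ‖f x‖ ≤ r := by
      intro r hrx
      have hr0 : 0 < r := lt_of_le_of_lt (norm_nonneg _) hrx
      have h1 : ‖g (r⁻¹ • x)‖ < 1 := by
        rw [map_smul, norm_smul, norm_inv, Real.norm_eq_abs, abs_of_pos hr0]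
        rw [inv_mul_lt_iff₀ hr0, mul_one]
        exact hrx
      have h2 := claim1 _ h1
      rw [map_smul, norm_smul, norm_inv, Real.norm_eq_abs, abs_of_pos hr0,
        inv_mul_le_iff₀ hr0, mul_one] at h2
      exact h2
    by_contra hcon
    push_neg at hcon
    obtain ⟨r, hr1, hr2⟩ := exists_between hcon
    exact absurd (hr r hr1) (not_le.2 hr2)
  -- Step 5: `f` factors through the range of `g`.
  set S := LinearMap.range g.toLinearMap with hS
  set H₀ := S.topologicalClosure with hH₀
  have hker : LinearMap.ker g.toLinearMap ≤ LinearMap.ker f.toLinearMap := by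
    intro x hx
    rw [LinearMap.mem_ker] at hx ⊢
    have := key x
    rw [ContinuousLinearMap.coe_coe] at hx
    rw [hx, norm_zero] at this
    exact norm_le_zero_iff.1 this
  let fq : (L ⧸ LinearMap.ker g.toLinearMap) →ₗ[ℝ] E :=
    (LinearMap.ker g.toLinearMap).liftQ f.toLinearMap hker
  let hmap : LinearMap.range g.toLinearMap →ₗ[ℝ] E :=
    fq ∘ₗ (g.toLinearMap.quotKerEquivRange.symm : _ →ₗ[ℝ] _)
  have h_apply : ∀ x : L, hmap ⟨g x, LinearMap.mem_range_self _ x⟩ = f x := by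
    intro x
    show fq (g.toLinearMap.quotKerEquivRange.symm ⟨g.toLinearMap x, _⟩) = f x
    rw [LinearMap.quotKerEquivRange_symm_apply_image]
    simp [fq]
  have hbound : ∀ y : LinearMap.range g.toLinearMap, ‖hmap y‖ ≤ 1 * ‖y‖ := by
    rintro ⟨y, x, rfl⟩
    rw [one_mul]
    have : hmap ⟨g.toLinearMap x, ⟨x, rfl⟩⟩ = f x := h_apply x
    rw [this]
    exact key x
  -- Step 6: the Hilbert space `H₀` is the closure of the range of `g`.
  let em : S →L[ℝ] H₀ :=
    (Submodule.subtypeL S).codRestrict H₀ fun y => S.le_topologicalClosure y.2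
  have h_dense : DenseRange em := by
    intro y
    have h1 : (Subtype.val '' Set.range em) = (S : Set N) := by
      ext z
      constructor
      · rintro ⟨w, ⟨s, rfl⟩, rfl⟩
        exact s.2
      · intro hz
        exact ⟨em ⟨z, hz⟩, ⟨⟨z, hz⟩, rfl⟩, rfl⟩
    rw [closure_subtype, h1]
    have h2 : (y : N) ∈ (S.topologicalClosure : Set N) := y.2
    rwa [Submodule.topologicalClosure_coe] at h2
  have hiso : Isometry (⇑em) := Isometry.of_dist_eq fun a b => rfl
  have h_e : IsUniformInducing (⇑em) := hiso.isUniformInducing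
  haveI : CompleteSpace N := inferInstanceAs (CompleteSpace (PiLp 2 fun i : I => H i))
  haveI : CompleteSpace ↥H₀ := Submodule.topologicalClosure.completeSpace S
  let p : H₀ →L[ℝ] E := (hmap.mkContinuous 1 hbound).extend em
  let g' : L →L[ℝ] H₀ :=
    g.codRestrict H₀ fun x => S.le_topologicalClosure (LinearMap.mem_range_self _ x)
  refine ⟨H₀, inferInstance, inferInstance, inferInstance, g', p, ?_⟩
  ext x
  have h2 : g' x = em ⟨g x, LinearMap.mem_range_self _ x⟩ := Subtype.ext rfl
  show f x = p (g' x)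
  rw [h2]
  rw [ContinuousLinearMap.extend_eq (h_dense := h_dense) (h_e := h_e), LinearMap.mkContinuous_apply]
  exact (h_apply x).symm
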